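/- Let k ≥ 2 be an integer and G a simple graph on n vertices with β := β^k(G) ≥ 1. Then δ(G) ≥ n − (n − 1)/β. -/

import Mathlib

open Finset
open scoped Classical

variable {V : Type*}

/-- The k-th neighborhood: vertices adjacent to at least `k` vertices of `S`. -/
noncomputable def kNbhd [Fintype V] (G : SimpleGraph V) (k : ℕ) (S : Finset V) : Finset V :=
  Finset.univ.filter fun v => k ≤ (S.filter fun u => G.Adj v u).card

/-- The k-th binding number. -/
noncomputable def bindingNum [Fintype V] (G : SimpleGraph V) (k : ℕ) : ℝ :=
  if h : (Finset.univ.filter fun S : Finset V =>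
      k ≤ S.card ∧ kNbhd G k S ≠ Finset.univ).Nonempty then
    (Finset.univ.filter fun S : Finset V =>
      k ≤ S.card ∧ kNbhd G k S ≠ Finset.univ).inf' h
      fun S => ((kNbhd G k S).card : ℝ) / (S.card : ℝ)
  else 0

theorem stmt_5 [Fintype V] (k : ℕ) (hk : 2 ≤ k) (G : SimpleGraph V)
    (hβ : 1 ≤ bindingNum G k) :
    ∀ v : V, (Fintype.card V : ℝ) - ((Fintype.card V : ℝ) - 1) / bindingNum G k ≤
      ((G.neighborSet v).ncard : ℝ) := by
  intro v
  set n := Fintype.card V with hn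
  set d := (G.neighborFinset v).card with hd
  have hncard : (G.neighborSet v).ncard = d := by
    rw [hd, ← Set.ncard_coe_finset, SimpleGraph.neighborFinset_def, Set.coe_toFinset]
  -- the filter set is nonempty (otherwise bindingNum = 0 < 1)
  by_cases h : (Finset.univ.filter fun S : Finset V =>
      k ≤ S.card ∧ kNbhd G k S ≠ Finset.univ).Nonempty
  swap
  · exfalso; rw [bindingNum, dif_neg h] at hβ; linarith
  -- k ≤ n
  obtain ⟨S₀, hS₀⟩ := h
  simp only [mem_filter] at hS₀
  have hkn : k ≤ n := hS₀.2.1.trans (Finset.card_le_univ S₀)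
  set T : Finset V := (G.neighborFinset v)ᶜ with hT
  have hvT : v ∈ T := by simp [hT]
  have hTcard : T.card = n - d := by rw [hT, Finset.card_compl]
  have hTpos : 1 ≤ T.card := Finset.card_pos.mpr ⟨v, hvT⟩
  obtain ⟨S, hTS, -, hScard⟩ := Finset.exists_subsuperset_card_eq (t := Finset.univ)
    (Finset.subset_univ T) (le_max_left T.card k)
    (max_le (Finset.card_le_univ T) (by simpa [Finset.card_univ] using hkn))
  -- v ∉ kNbhd G k S
  have hvN : v ∉ kNbhd G k S := by
    intro hv
    rw [kNbhd, mem_filter] at hv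
    have hsub : (S.filter fun u => G.Adj v u) ⊆ S \ T := by
      intro u hu
      rw [mem_filter] at hu
      rw [mem_sdiff]
      exact ⟨hu.1, by simp [hT, hu.2]⟩
    have h1 : (S.filter fun u => G.Adj v u).card ≤ S.card - T.card :=
      (Finset.card_le_card hsub).trans (Finset.card_sdiff_of_subset hTS).le
    have h2 : S.card - T.card < k := by
      rw [hScard]
      omega
    omega
  have hNne : kNbhd G k S ≠ Finset.univ := fun heq => hvN (heq ▸ Finset.mem_univ v)
  have hSmem : S ∈ Finset.univ.filter fun S : Finset V =>
      k ≤ S.card ∧ kNbhd G k S ≠ Finset.univ := by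
    rw [mem_filter]
    exact ⟨Finset.mem_univ S, by rw [hScard]; exact le_max_right _ _, hNne⟩
  have hle : bindingNum G k ≤ ((kNbhd G k S).card : ℝ) / (S.card : ℝ) := by
    rw [bindingNum, dif_pos ⟨S, hSmem⟩]
    exact Finset.inf'_le _ hSmem
  have hNcard : (kNbhd G k S).card ≤ n - 1 := by
    have : kNbhd G k S ⊆ Finset.univ.erase v :=
      fun u hu => Finset.mem_erase.mpr ⟨fun h => hvN (h ▸ hu), Finset.mem_univ u⟩
    calc (kNbhd G k S).card ≤ (Finset.univ.erase v).card := Finset.card_le_card this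
    _ = n - 1 := by rw [Finset.card_erase_of_mem (Finset.mem_univ v), Finset.card_univ]
  have hn1 : 1 ≤ n := Fintype.card_pos_iff.mpr ⟨v⟩
  have hdn : d ≤ n := by
    exact Finset.card_le_univ (G.neighborFinset v)
  set β := bindingNum G k with hβdef
  have hβpos : (0:ℝ) < β := by linarith
  have hSpos : (0:ℝ) < (S.card : ℝ) := by
    have : 0 < S.card := by omega
    exact_mod_cast this
  have key : β * (S.card : ℝ) ≤ (n:ℝ) - 1 := by
    have h1 : β * (S.card : ℝ) ≤ ((kNbhd G k S).card : ℝ) := by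
      exact (le_div_iff₀ hSpos).mp hle
    have h2 : ((kNbhd G k S).card : ℝ) ≤ (n:ℝ) - 1 := by
      have := hNcard
      have : ((kNbhd G k S).card : ℝ) ≤ ((n - 1 : ℕ) : ℝ) := by exact_mod_cast this
      rwa [Nat.cast_sub hn1, Nat.cast_one] at this
    linarith
  have hTS' : ((n:ℝ) - d) ≤ (S.card : ℝ) := by
    have : T.card ≤ S.card := Finset.card_le_card hTS
    have h3 : ((T.card : ℕ) : ℝ) = (n:ℝ) - d := by
      rw [hTcard, Nat.cast_sub hdn]
    rw [← h3]
    exact_mod_cast this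
  have key2 : β * ((n:ℝ) - d) ≤ (n:ℝ) - 1 := by
    have := mul_le_mul_of_nonneg_left hTS' hβpos.le
    linarith
  have : (n:ℝ) - d ≤ ((n:ℝ) - 1) / β := by
    rw [le_div_iff₀ hβpos]
    linarith [key2]
  rw [hncard]
  -- done
  linarith
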